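/- If ν satisfies the vanishing complexity equation ν'(rλ' − rν' + 2) − 2rν'' = 0 with ν' ≠ 0 on (0, R₀) and λ is constant (λ' = 0), then e^{ν(r)} = (A + B r²)² for constants A, B with B ≠ 0. -/

import Mathlib

open Real Set

lemma const_of_hasDerivAt_zero {s : Set ℝ} (hs : Convex ℝ s) (ho : IsOpen s)
    {F : ℝ → ℝ} (h : ∀ x ∈ s, HasDerivAt F 0 x) {x y : ℝ}
    (hx : x ∈ s) (hy : y ∈ s) : F x = F y := by
  apply hs.is_const_of_fderivWithin_eq_zero
    (fun z hz => ((h z hz).differentiableAt).differentiableWithinAt) _ hx hy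
  intro z hz
  rw [fderivWithin_of_isOpen ho hz, (h z hz).hasFDerivAt.fderiv]
  ext
  simp

theorem vanishing_complexity_flat_lambda
    (R₀ : ℝ) (hR₀ : 0 < R₀) (f g : ℝ → ℝ)
    (hf : DifferentiableOn ℝ f (Ioo 0 R₀))
    (hf' : DifferentiableOn ℝ (deriv f) (Ioo 0 R₀))
    (hf'ne : ∀ r ∈ Ioo 0 R₀, deriv f r ≠ 0)
    (hg' : ∀ r ∈ Ioo 0 R₀, deriv g r = 0)
    (hVC : ∀ r ∈ Ioo 0 R₀,
      deriv f r * (r * deriv g r - r * deriv f r + 2) - 2 * r * deriv (deriv f) r = 0) :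
    ∃ A B : ℝ, B ≠ 0 ∧ ∀ r ∈ Ioo 0 R₀, Real.exp (f r) = (A + B * r ^ 2) ^ 2 := by
  set S := Ioo (0:ℝ) R₀ with hS
  have hSo : IsOpen S := isOpen_Ioo
  have hSc : Convex ℝ S := convex_Ioo _ _
  set y : ℝ → ℝ := fun r => Real.exp (f r / 2) with hydef
  set w : ℝ → ℝ := fun r => deriv f r / 2 * Real.exp (f r / 2) with hwdef
  have hfd : ∀ r ∈ S, HasDerivAt f (deriv f r) r := fun r hr =>
    (hf.differentiableAt (hSo.mem_nhds hr)).hasDerivAt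
  have hfd2 : ∀ r ∈ S, HasDerivAt (deriv f) (deriv (deriv f) r) r := fun r hr =>
    (hf'.differentiableAt (hSo.mem_nhds hr)).hasDerivAt
  have hy : ∀ r ∈ S, HasDerivAt y (w r) r := by
    intro r hr
    have := ((hfd r hr).div_const 2).exp
    convert this using 1
    simp [hwdef]
    ring
  have hw : ∀ r ∈ S, HasDerivAt w
      ((deriv (deriv f) r / 2 + (deriv f r) ^ 2 / 4) * Real.exp (f r / 2)) r := by
    intro r hr
    have := ((hfd2 r hr).div_const 2).mul ((hfd r hr).div_const 2).exp
    refine this.congr_deriv ?_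
    ring
  set h : ℝ → ℝ := fun r => w r / r with hhdef
  have hh : ∀ r ∈ S, HasDerivAt h 0 r := by
    intro r hr
    have hrne : r ≠ 0 := ne_of_gt hr.1
    have := (hw r hr).div (hasDerivAt_id r) hrne
    refine this.congr_deriv ?_
    have key := hVC r hr
    rw [hg' r hr] at key
    rw [div_eq_zero_iff]
    left
    simp only [hwdef, id_eq]
    linear_combination (-(Real.exp (f r / 2)) / 4) * key
  have hr₀ : R₀ / 2 ∈ S := ⟨by linarith, by linarith⟩
  set c := h (R₀ / 2) with hc
  have hch : ∀ r ∈ S, w r = c * r := by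
    intro r hr
    have := const_of_hasDerivAt_zero hSc hSo hh hr hr₀
    have hrne : r ≠ 0 := ne_of_gt hr.1
    rw [hhdef] at this
    simp only at this
    exact (div_eq_iff hrne).mp this
  have hcne : c ≠ 0 := by
    intro h0
    have := hch _ hr₀
    rw [h0, zero_mul] at this
    have h2 : deriv f (R₀ / 2) / 2 * Real.exp (f (R₀ / 2) / 2) = 0 := this
    rcases mul_eq_zero.1 h2 with h1 | h1
    · exact hf'ne _ hr₀ (by linarith)
    · exact (Real.exp_pos _).ne' h1
  set z : ℝ → ℝ := fun r => y r - c / 2 * r ^ 2 with hzdef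
  have hz : ∀ r ∈ S, HasDerivAt z 0 r := by
    intro r hr
    have := (hy r hr).sub (((hasDerivAt_pow 2 r).const_mul (c / 2)))
    refine this.congr_deriv ?_
    rw [hch r hr]
    push_cast
    ring
  set A := z (R₀ / 2) with hA
  refine ⟨A, c / 2, by positivity, ?_⟩
  intro r hr
  have hzr : z r = A := const_of_hasDerivAt_zero hSc hSo hz hr hr₀
  have hyr : y r = A + c / 2 * r ^ 2 := by
    have : y r - c / 2 * r ^ 2 = A := hzr
    linarith
  have : Real.exp (f r) = (y r) ^ 2 := by
    rw [hydef]
    simp only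
    rw [sq, ← Real.exp_add]
    ring_nf
  rw [this, hyr]
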